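/- Fix N ≥ 1 samples (x_1, y_1), …, (x_N, y_N) with y_j ∈ {0,1}, a finite index set C, real numbers c_k(x_j) ∈ [0,1] for each k ∈ C and j, base logits u_j ∈ ℝ, and ε > 0. Define σ(t) = 1/(1 + exp(−t)) and the regularized objective F : ℝ^C → ℝ by F(l) = (1/N) Σ_{j=1}^N [ −y_j log σ(u_j + Σ_{k∈C} l_k c_k(x_j)) − (1 − y_j) log(1 − σ(u_j + Σ_{k∈C} l_k c_k(x_j))) ] + ε · Σ_{k∈C} |l_k|. If l* ∈ ℝ^C is a global minimizer of F, then for every k ∈ C, |(1/N) Σ_{j=1}^N c_k(x_j) · ( σ(u_j + Σ_{k'∈C} l*_{k'} c_{k'}(x_j)) − y_j )| ≤ ε; that is, the post-processed predictor f*(x_j) = σ(u_j + Σ_{k∈C} l*_k c_k(x_j)) is (C, ε)-multi-accurate on the empirical distribution of the N samples. -/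

import Mathlib

open Real Filter Topology

/-- Rewrite the per-sample cross-entropy loss in a smooth closed form. -/
lemma ma_loss_eq (y s : ℝ) :
    -y * Real.log (1 / (1 + Real.exp (-s))) -
      (1 - y) * Real.log (1 - 1 / (1 + Real.exp (-s)))
    = Real.log (1 + Real.exp (-s)) + (1 - y) * s := by
  have hpos : (0:ℝ) < 1 + Real.exp (-s) := by positivity
  have h1 : Real.log (1 / (1 + Real.exp (-s))) = - Real.log (1 + Real.exp (-s)) := by
    rw [one_div, Real.log_inv]
  have h2 : 1 - 1 / (1 + Real.exp (-s)) = Real.exp (-s) / (1 + Real.exp (-s)) := by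
    field_simp
    ring
  have h3 : Real.log (Real.exp (-s) / (1 + Real.exp (-s)))
      = -s - Real.log (1 + Real.exp (-s)) := by
    rw [Real.log_div (Real.exp_ne_zero _) (ne_of_gt hpos), Real.log_exp]
  rw [h1, h2, h3]; ring

lemma ma_outer_deriv (y s : ℝ) :
    HasDerivAt (fun s => Real.log (1 + Real.exp (-s)) + (1 - y) * s)
      (1 / (1 + Real.exp (-s)) - y) s := by
  have hpos : (0:ℝ) < 1 + Real.exp (-s) := by positivity
  have hexp : HasDerivAt (fun s : ℝ => Real.exp (-s)) (-Real.exp (-s)) s := by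
    simpa using (hasDerivAt_neg s).exp
  have h1 : HasDerivAt (fun s : ℝ => 1 + Real.exp (-s)) (-Real.exp (-s)) s :=
    hexp.const_add 1
  have h2 : HasDerivAt (fun s : ℝ => Real.log (1 + Real.exp (-s)))
      ((-Real.exp (-s)) / (1 + Real.exp (-s))) s := h1.log (ne_of_gt hpos)
  have h3 : HasDerivAt (fun s : ℝ => (1 - y) * s) (1 - y) s := by
    simpa using (hasDerivAt_id s).const_mul (1 - y)
  have h4 := h2.add h3
  refine h4.congr_deriv ?_
  field_simp
  ring

lemma ma_sample_deriv (y a cc : ℝ) :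
    HasDerivAt (fun t => Real.log (1 + Real.exp (-(a + t * cc))) + (1 - y) * (a + t * cc))
      (cc * (1 / (1 + Real.exp (-a)) - y)) 0 := by
  have hinner : HasDerivAt (fun t : ℝ => a + t * cc) cc 0 := by
    simpa using ((hasDerivAt_id (0:ℝ)).mul_const cc).const_add a
  have houter := ma_outer_deriv y (a + 0 * cc)
  have h := houter.comp 0 hinner
  have heq : ((fun s => Real.log (1 + Real.exp (-s)) + (1 - y) * s) ∘ fun t : ℝ => a + t * cc)
      = fun t => Real.log (1 + Real.exp (-(a + t * cc))) + (1 - y) * (a + t * cc) := rfl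
  rw [heq] at h
  refine h.congr_deriv ?_
  simp only [zero_mul, add_zero]
  ring

/-- A global minimizer `l*` of the ℓ1-regularized logistic cross-entropy
objective yields a post-processed predictor
`f*(x_j) = σ(u_j + Σ_k l*_k c_k(x_j))` that is `(C, ε)`-multi-accurate on the
empirical distribution of the `N` samples. -/
theorem minimizer_is_multiaccurate
    {N : ℕ} (hN : 1 ≤ N) {C : Type*} [Fintype C]
    (y : Fin N → ℝ) (hy : ∀ j, y j = 0 ∨ y j = 1)
    (c : C → Fin N → ℝ) (hc : ∀ k j, c k j ∈ Set.Icc (0 : ℝ) 1)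
    (u : Fin N → ℝ) (ε : ℝ) (hε : 0 < ε)
    (σ : ℝ → ℝ) (hσ : ∀ t, σ t = 1 / (1 + Real.exp (-t)))
    (F : (C → ℝ) → ℝ)
    (hF : ∀ l : C → ℝ, F l =
      (1 / (N : ℝ)) * ∑ j, (-(y j) * Real.log (σ (u j + ∑ k, l k * c k j))
        - (1 - y j) * Real.log (1 - σ (u j + ∑ k, l k * c k j)))
      + ε * ∑ k, |l k|)
    (lstar : C → ℝ) (hmin : ∀ l : C → ℝ, F lstar ≤ F l) :
    ∀ k : C,
      |(1 / (N : ℝ)) * ∑ j, c k j * (σ (u j + ∑ k', lstar k' * c k' j) - y j)| ≤ ε := by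
  intro k
  classical
  set A : Fin N → ℝ := fun j => u j + ∑ k', lstar k' * c k' j with hA
  set D : ℝ := (1 / (N : ℝ)) * ∑ j, c k j * (1 / (1 + Real.exp (-(A j))) - y j) with hD
  have hgoal : (1 / (N : ℝ)) * ∑ j, c k j * (σ (u j + ∑ k', lstar k' * c k' j) - y j) = D := by
    simp only [hD, hσ, hA]
  rw [hgoal]
  -- the smooth part of the objective along direction e_k
  set φ : ℝ → ℝ := fun t => (1 / (N : ℝ)) *
      ∑ j, (Real.log (1 + Real.exp (-(A j + t * c k j))) + (1 - y j) * (A j + t * c k j))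
    with hφdef
  have hφ : HasDerivAt φ D 0 := by
    have hsum : HasDerivAt
        (fun t => ∑ j, (Real.log (1 + Real.exp (-(A j + t * c k j)))
          + (1 - y j) * (A j + t * c k j)))
        (∑ j, c k j * (1 / (1 + Real.exp (-(A j))) - y j)) 0 :=
      HasDerivAt.fun_sum (fun j _ => ma_sample_deriv (y j) (A j) (c k j))
    simpa [hφdef, hD] using hsum.const_mul (1 / (N : ℝ))
  -- value of F at the perturbed point
  set S' : ℝ := ∑ k' ∈ Finset.univ \ {k}, |lstar k'| with hS'
  have hsumupd : ∀ (t : ℝ) (j : Fin N),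
      (∑ k', Function.update lstar k (lstar k + t) k' * c k' j)
        = (∑ k', lstar k' * c k' j) + t * c k j := by
    intro t j
    have h1 : ∀ x ∈ Finset.univ, Function.update lstar k (lstar k + t) x * c x j
        = Function.update (fun k' => lstar k' * c k' j) k ((lstar k + t) * c k j) x := by
      intro x _
      rcases eq_or_ne x k with rfl | h
      · simp
      · simp [Function.update_of_ne h]
    rw [Finset.sum_congr rfl h1, Finset.sum_update_of_mem (Finset.mem_univ k)]
    have h2 : (∑ k', lstar k' * c k' j)
        = lstar k * c k j + ∑ x ∈ Finset.univ \ {k}, lstar x * c x j := by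
      rw [← Finset.sum_update_of_mem (Finset.mem_univ k)]
      apply Finset.sum_congr rfl
      intro x _
      rcases eq_or_ne x k with rfl | h
      · simp
      · simp [Function.update_of_ne h]
    rw [h2]; ring
  have habsupd : ∀ t : ℝ,
      (∑ k', |Function.update lstar k (lstar k + t) k'|) = S' + |lstar k + t| := by
    intro t
    have h1 : ∀ x ∈ Finset.univ, |Function.update lstar k (lstar k + t) x|
        = Function.update (fun k' => |lstar k'|) k (|lstar k + t|) x := by
      intro x _
      rcases eq_or_ne x k with rfl | h
      · simp
      · simp [Function.update_of_ne h]
    rw [Finset.sum_congr rfl h1, Finset.sum_update_of_mem (Finset.mem_univ k), hS']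
    ring
  have hFt : ∀ t : ℝ, F (Function.update lstar k (lstar k + t))
      = φ t + ε * S' + ε * |lstar k + t| := by
    intro t
    rw [hF, habsupd]
    have h1 : ∀ j ∈ Finset.univ,
        (-(y j) * Real.log (σ (u j + ∑ k', Function.update lstar k (lstar k + t) k' * c k' j))
          - (1 - y j) * Real.log (1 - σ (u j + ∑ k', Function.update lstar k (lstar k + t) k' * c k' j)))
        = Real.log (1 + Real.exp (-(A j + t * c k j))) + (1 - y j) * (A j + t * c k j) := by
      intro j _
      have harg : u j + ∑ k', Function.update lstar k (lstar k + t) k' * c k' j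
          = A j + t * c k j := by
        rw [hsumupd t j, hA]; ring
      rw [harg, hσ, ma_loss_eq]
    rw [Finset.sum_congr rfl h1, hφdef]
    ring
  have hl0 : Function.update lstar k (lstar k + 0) = lstar := by
    simp
  have hF0 : F lstar = φ 0 + ε * S' + ε * |lstar k| := by
    have := hFt 0
    rw [hl0] at this
    simpa using this
  have key : ∀ t : ℝ, φ 0 + ε * |lstar k| ≤ φ t + ε * |lstar k + t| := by
    intro t
    have := hmin (Function.update lstar k (lstar k + t))
    rw [hFt t, hF0] at this
    linarith
  -- subgradient argument via slope limits
  have hslope : Tendsto (slope φ 0) (𝓝[≠] (0:ℝ)) (𝓝 D) :=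
    hasDerivAt_iff_tendsto_slope.mp hφ
  have h1 : -ε ≤ D := by
    have ht : Tendsto (slope φ 0) (𝓝[>] (0:ℝ)) (𝓝 D) :=
      hslope.mono_left (nhdsWithin_mono _ (fun x hx => ne_of_gt hx))
    refine ge_of_tendsto ht ?_
    filter_upwards [self_mem_nhdsWithin] with t ht
    rw [Set.mem_Ioi] at ht
    have hk := key t
    have habs' : |lstar k + t| ≤ |lstar k| + t := by
      have h := abs_add_le (lstar k) t
      rwa [abs_of_pos ht] at h
    have hφt : -(ε * t) ≤ φ t - φ 0 := by nlinarith
    rw [slope_def_field, sub_zero, le_div_iff₀ ht]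
    nlinarith
  have h2 : D ≤ ε := by
    have ht : Tendsto (slope φ 0) (𝓝[<] (0:ℝ)) (𝓝 D) :=
      hslope.mono_left (nhdsWithin_mono _ (fun x hx => ne_of_lt hx))
    refine le_of_tendsto ht ?_
    filter_upwards [self_mem_nhdsWithin] with t ht
    rw [Set.mem_Iio] at ht
    have hk := key t
    have habs' : |lstar k + t| ≤ |lstar k| - t := by
      have h := abs_add_le (lstar k) t
      rw [abs_of_neg ht] at h
      linarith
    have hφt : ε * t ≤ φ t - φ 0 := by nlinarith
    rw [slope_def_field, sub_zero, div_le_iff_of_neg ht]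
    nlinarith
  exact abs_le.mpr ⟨h1, h2⟩
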